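/- arXiv:2305.17658 — 2 statements merged into one kernel-verified Lean document; each statement's English description precedes it below -/
import Mathlib

section
/- Let W be a finite-dimensional complex vector space with dim_ℂ W ≥ 2, and let φ : W → W* be a ℂ-linear map into the dual space W* = Hom_ℂ(W, ℂ) that is symmetric, i.e. (φ(w₁))(w₂) = (φ(w₂))(w₁) for all w₁, w₂ ∈ W. If φ(w₁) ⊗ w₂ = φ(w₂) ⊗ w₁ holds in W* ⊗_ℂ W for all w₁, w₂ ∈ W, then φ = 0. (Equivalently, the linear map sending a symmetric homomorphism φ ∈ Hom^s(W, W*) to the homomorphism Φ : ⋀²W → W* ⊗ W, Φ(w₁ ∧ w₂) = φ(w₁) ⊗ w₂ − φ(w₂) ⊗ w₁, is injective; this is the linear-algebra content of the statement that the natural homomorphism from the space of infinitesimal deformations of a polarized abelian variety of dimension n ≥ 2 to its (2,0)-infinitesimal variation of Hodge structure is injective.) -/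
open TensorProduct

/-- If `φ : W → W*` is a symmetric linear map on a finite-dimensional complex vector
space of dimension at least `2`, and `φ w₁ ⊗ w₂ = φ w₂ ⊗ w₁` in `W* ⊗ W` for all
`w₁, w₂`, then `φ = 0`. -/
theorem symmetric_hom_eq_zero_of_tensor_symm
    (W : Type*) [AddCommGroup W] [Module ℂ W] [FiniteDimensional ℂ W]
    (hdim : 2 ≤ Module.finrank ℂ W)
    (φ : W →ₗ[ℂ] Module.Dual ℂ W)
    (hsym : ∀ w₁ w₂ : W, φ w₁ w₂ = φ w₂ w₁)
    (h : ∀ w₁ w₂ : W,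
      (φ w₁ ⊗ₜ[ℂ] w₂ : Module.Dual ℂ W ⊗[ℂ] W) = φ w₂ ⊗ₜ[ℂ] w₁) :
    φ = 0 := by
  ext w
  -- find v outside the span of w
  have hlt : Submodule.span ℂ {w} < ⊤ := by
    refine lt_of_le_of_ne le_top fun htop => ?_
    have h1 : Module.finrank ℂ (Submodule.span ℂ {w}) ≤ 1 := by
      simpa using finrank_span_le_card ({w} : Set W)
    rw [htop, finrank_top] at h1
    omega
  obtain ⟨v, hv⟩ : ∃ v : W, v ∉ Submodule.span ℂ {w} := by
    rw [lt_top_iff_ne_top] at hlt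
    by_contra hc
    push_neg at hc
    exact hlt (by ext x; simp [hc x])
  obtain ⟨f, hfv, hfmap⟩ :=
    Submodule.exists_dual_map_eq_bot_of_notMem hv inferInstance
  have hfw : f w = 0 := by
    have : f w ∈ Submodule.map f (Submodule.span ℂ {w}) :=
      ⟨w, Submodule.mem_span_singleton_self w, rfl⟩
    rw [hfmap] at this
    simpa using this
  -- apply (rid ∘ lTensor f) to the hypothesis
  have key := congrArg
    ((TensorProduct.rid ℂ (Module.Dual ℂ W)).toLinearMap ∘ₗ
      LinearMap.lTensor (Module.Dual ℂ W) f) (h w v)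
  simp only [LinearMap.comp_apply, LinearMap.lTensor_tmul,
    LinearEquiv.coe_coe, TensorProduct.rid_tmul, hfw, zero_smul] at key
  have : φ w = 0 := by
    have := smul_eq_zero.mp key
    tauto
  simp [this]
end

section
/- Let φ be a ℂ-linear functional on the space Sym⁴(V) of homogeneous quartic polynomials in x₀, x₁, x₂, x₃, and for each homogeneous quadratic polynomial q let φ_q denote the linear functional on the space Sym²(V) of homogeneous quadratic polynomials defined by φ_q(q') = φ(q·q'). If φ_{q₁} ⊗ q₂ = φ_{q₂} ⊗ q₁ holds in Sym²(V)* ⊗_ℂ Sym²(V) for all homogeneous quadratics q₁, q₂, then φ = 0. (This is the injectivity of the contraction homomorphism τ : Sym⁴(V)* → Hom(⋀²Sym²(V), Sym²(V)* ⊗ Sym²(V)), τ(φ)(q₁ ∧ q₂) = φ_{q₁} ⊗ q₂ − φ_{q₂} ⊗ q₁, which computes the (2,0)-infinitesimal variation of Hodge structure of the polarized Albanese variety in terms of the infinitesimal deformation.) -/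
open TensorProduct

/-- `Sym²(V)`: the homogeneous quadratic polynomials in four variables. -/
noncomputable abbrev Sym2V : Submodule ℂ (MvPolynomial (Fin 4) ℂ) :=
  MvPolynomial.homogeneousSubmodule (Fin 4) ℂ 2

/-- `Sym⁴(V)`: the homogeneous quartic polynomials in four variables. -/
noncomputable abbrev Sym4V : Submodule ℂ (MvPolynomial (Fin 4) ℂ) :=
  MvPolynomial.homogeneousSubmodule (Fin 4) ℂ 4

lemma mul_mem_Sym4V (q q' : Sym2V) : (q : MvPolynomial (Fin 4) ℂ) * q' ∈ Sym4V :=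
  (MvPolynomial.mem_homogeneousSubmodule 4 _).mpr
    (((MvPolynomial.mem_homogeneousSubmodule 2 _).mp q.2).mul
      ((MvPolynomial.mem_homogeneousSubmodule 2 _).mp q'.2))

/-- For `φ ∈ Sym⁴(V)*` and a homogeneous quadratic `q`, the linear functional
`φ_q ∈ Sym²(V)*` defined by `φ_q (q') = φ (q * q')`. -/
noncomputable def contrFunctional (φ : Module.Dual ℂ Sym4V) (q : Sym2V) :
    Module.Dual ℂ Sym2V where
  toFun q' := φ ⟨(q : MvPolynomial (Fin 4) ℂ) * q', mul_mem_Sym4V q q'⟩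
  map_add' a b := by
    rw [← map_add]
    exact congrArg φ (Subtype.ext (mul_add _ _ _))
  map_smul' c a := by
    rw [RingHom.id_apply, ← map_smul]
    exact congrArg φ (Subtype.ext (mul_smul_comm c _ _))

lemma degree_eq_sum_univ (d : Fin 4 →₀ ℕ) : d.degree = ∑ i : Fin 4, d i := by
  rw [Finsupp.degree]
  exact Finset.sum_subset (Finset.subset_univ _) (by
    intro i _ hi
    exact Finsupp.notMem_support_iff.mp hi)

lemma exists_le_deg (d : Fin 4 →₀ ℕ) (k : ℕ) (hk : k ≤ d.degree) :
    ∃ e : Fin 4 →₀ ℕ, e ≤ d ∧ e.degree = k := by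
  induction k with
  | zero => exact ⟨0, zero_le, map_zero _⟩
  | succ n ih =>
    obtain ⟨e, hle, hdeg⟩ := ih (Nat.le_of_succ_le hk)
    have hlt : e.degree < d.degree := lt_of_lt_of_le (hdeg ▸ Nat.lt_succ_self n) hk
    have : ∃ i, e i < d i := by
      by_contra hc
      push_neg at hc
      have : d.degree ≤ e.degree := by
        rw [degree_eq_sum_univ, degree_eq_sum_univ]
        exact Finset.sum_le_sum fun i _ => hc i
      omega
    obtain ⟨i, hi⟩ := this
    refine ⟨e + Finsupp.single i 1, ?_, ?_⟩
    · intro j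
      simp only [Finsupp.add_apply, Finsupp.single_apply]
      rcases eq_or_ne i j with rfl | hij
      · simpa using hi
      · simpa [hij] using hle j
    · rw [degree_eq_sum_univ, degree_eq_sum_univ] at *
      simp [Finsupp.add_apply, Finset.sum_add_distrib, hdeg, Finsupp.single_apply]

/-- `contrFunctional` is linear in `q`. -/
lemma contr_linear (φ : Module.Dual ℂ Sym4V) (a b : Sym2V) (c : ℂ) :
    contrFunctional φ (a + c • b) = contrFunctional φ a + c • contrFunctional φ b := by
  ext q'
  show φ _ = φ _ + c • φ _
  rw [← map_smul, ← map_add]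
  refine congrArg φ (Subtype.ext ?_)
  push_cast
  rw [add_mul, smul_mul_assoc]

/-- If `φ ∈ Sym⁴(V)*` satisfies `φ_{q₁} ⊗ q₂ = φ_{q₂} ⊗ q₁` in `Sym²(V)* ⊗ Sym²(V)`
for all homogeneous quadratics `q₁, q₂`, then `φ = 0`; this is the injectivity of the
contraction homomorphism `τ : Sym⁴(V)* → Hom(⋀²Sym²(V), Sym²(V)* ⊗ Sym²(V))`. -/
theorem contraction_injective
    (φ : Module.Dual ℂ Sym4V)
    (h : ∀ q₁ q₂ : Sym2V,
      (contrFunctional φ q₁ ⊗ₜ[ℂ] q₂ : Module.Dual ℂ Sym2V ⊗[ℂ] Sym2V) =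
        contrFunctional φ q₂ ⊗ₜ[ℂ] q₁) :
    φ = 0 := by
  classical
  -- Step 1: scalar identity
  have key : ∀ (f : Sym2V →ₗ[ℂ] ℂ) (q₁ q₂ q₃ : Sym2V),
      contrFunctional φ q₁ q₃ * f q₂ = contrFunctional φ q₂ q₃ * f q₁ := by
    intro f q₁ q₂ q₃
    have := congrArg (TensorProduct.lift
      ((LinearMap.mul ℂ ℂ).compl₁₂ (LinearMap.applyₗ (R := ℂ) q₃) f)) (h q₁ q₂)
    simpa using this
  -- coefficient functional
  set F : (Fin 4 →₀ ℕ) → (Sym2V →ₗ[ℂ] ℂ) :=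
    fun μ => (MvPolynomial.lcoeff ℂ μ).comp Sym2V.subtype with hF
  have hFapp : ∀ μ (q : Sym2V), F μ q = MvPolynomial.coeff μ (q : MvPolynomial (Fin 4) ℂ) :=
    fun μ q => rfl
  -- Step 2: vanishing when a coefficient vanishes
  have zero_of_coeff : ∀ (μ : Fin 4 →₀ ℕ), μ.degree = 2 →
      ∀ (q : Sym2V), MvPolynomial.coeff μ (q : MvPolynomial (Fin 4) ℂ) = 0 →
      contrFunctional φ q = 0 := by
    intro μ hμ q hq
    have hmem : (MvPolynomial.monomial μ (1 : ℂ)) ∈ Sym2V :=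
      MvPolynomial.isHomogeneous_monomial _ hμ
    ext q₃
    have := key (F μ) ⟨_, hmem⟩ q q₃
    rw [hFapp, hFapp] at this
    simp only [hq, mul_zero] at this
    simp only [MvPolynomial.coeff_monomial, if_pos rfl, mul_one] at this
    simpa using this.symm
  -- monomials x₀², x₁²
  have hdeg0 : (Finsupp.single (0 : Fin 4) 2).degree = 2 := by
    simp [Finsupp.degree_apply, Finsupp.support_single_ne_zero]
  have hdeg1 : (Finsupp.single (1 : Fin 4) 2).degree = 2 := by
    simp [Finsupp.degree_apply, Finsupp.support_single_ne_zero]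
  have hX0mem : (MvPolynomial.monomial (Finsupp.single (0 : Fin 4) 2) (1 : ℂ)) ∈ Sym2V :=
    MvPolynomial.isHomogeneous_monomial _ hdeg0
  set X0 : Sym2V := ⟨_, hX0mem⟩ with hX0
  -- contr φ X0 = 0
  have hX0zero : contrFunctional φ X0 = 0 := by
    apply zero_of_coeff (Finsupp.single 1 2) hdeg1
    rw [hX0]
    simp [MvPolynomial.coeff_monomial, Finsupp.single_eq_single_iff]
  -- Step 3: contr φ q = 0 for all q
  have contr_all : ∀ q : Sym2V, contrFunctional φ q = 0 := by
    intro q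
    set c : ℂ := MvPolynomial.coeff (Finsupp.single 0 2) (q : MvPolynomial (Fin 4) ℂ) with hc
    have hq' : contrFunctional φ (q + (-c) • X0) = 0 := by
      apply zero_of_coeff (Finsupp.single 0 2) hdeg0
      push_cast
      simp [MvPolynomial.coeff_add, MvPolynomial.coeff_smul, hX0,
        MvPolynomial.coeff_monomial, ← hc]
    have := contr_linear φ q X0 (-c)
    rw [hq', hX0zero] at this
    simpa using this.symm
  -- Step 4: φ vanishes on all products, hence on all monomials, hence on everything
  have prod_zero : ∀ (q q' : Sym2V), φ ⟨(q : MvPolynomial (Fin 4) ℂ) * q', mul_mem_Sym4V q q'⟩ = 0 := by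
    intro q q'
    have := contr_all q
    have h2 := congrFun (congrArg DFunLike.coe this) q'
    simp at h2
    exact h2
  ext p
  obtain ⟨p, hp⟩ := p
  have hdeg4 : ∀ m ∈ p.support, m.degree = 4 := by
    intro m hm
    rw [Finsupp.degree_eq_weight_one]
    exact hp (MvPolynomial.mem_support_iff.mp hm)
  -- p is a sum of its degree-4 monomials
  have hmono : ∀ (m : Fin 4 →₀ ℕ) (hdeg : m.degree = 4) (c : ℂ),
      φ ⟨MvPolynomial.monomial m c, MvPolynomial.isHomogeneous_monomial c hdeg⟩ = 0 := by
    intro m hdeg c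
    obtain ⟨e, hle, he⟩ := exists_le_deg m 2 (by omega)
    have hsub : (m - e).degree = 2 := by
      rw [degree_eq_sum_univ] at *
      have : ∀ i, (m - e) i = m i - e i := fun i => Finsupp.tsub_apply m e i
      rw [Finset.sum_congr rfl (fun i _ => this i)]
      have : ∑ i : Fin 4, (m i - e i) = ∑ i : Fin 4, m i - ∑ i : Fin 4, e i := by
        rw [Finset.sum_tsub_distrib]
        intro i _
        exact hle i
      omega
    have hememb : (MvPolynomial.monomial e (1 : ℂ)) ∈ Sym2V :=
      MvPolynomial.isHomogeneous_monomial _ he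
    have hmemb2 : (MvPolynomial.monomial (m - e) c) ∈ Sym2V :=
      MvPolynomial.isHomogeneous_monomial _ hsub
    have heq : MvPolynomial.monomial m c =
        (MvPolynomial.monomial e (1 : ℂ)) * MvPolynomial.monomial (m - e) c := by
      have hme : e + (m - e) = m := by
        ext j
        have hj := Finsupp.le_def.mp hle j
        simp only [Finsupp.add_apply, Finsupp.tsub_apply]
        omega
      rw [MvPolynomial.monomial_mul, one_mul, hme]
    have := prod_zero ⟨_, hememb⟩ ⟨_, hmemb2⟩
    convert this using 2
    exact Subtype.ext heq
  -- now sum up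
  have hsum : (⟨p, hp⟩ : Sym4V) = ∑ m ∈ p.support.attach,
      ⟨MvPolynomial.monomial m.1 (MvPolynomial.coeff m.1 p),
        MvPolynomial.isHomogeneous_monomial _ (hdeg4 m.1 m.2)⟩ := by
    apply Subtype.ext
    push_cast
    rw [Finset.sum_attach p.support (fun m => MvPolynomial.monomial m (MvPolynomial.coeff m p))]
    exact (MvPolynomial.support_sum_monomial_coeff p).symm
  rw [hsum, map_sum]
  simp only [LinearMap.zero_apply]
  apply Finset.sum_eq_zero
  intro m _
  exact hmono m.1 (hdeg4 m.1 m.2) _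
end
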